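/- Faà di Bruno's formula: if f and g are n-times differentiable real functions, then the n-th derivative of the composite Φ(t) = f(g(t)) equals Y_n(f₁,g₁; f₂,g₂; ...; f_n,g_n), where f_h = f^{(h)}(g(t)), g_k = g^{(k)}(t), and Y_n is the n-th complete Bell polynomial. -/

import Mathlib

/-- Partial (exponential) Bell polynomials `B_{n,k}(g₁, g₂, …)`, defined by the recursion
`B_{n,k} = ∑_{h=0}^{n-k} C(n-1,h) B_{n-h-1,k-1} g_{h+1}`, with `B_{0,0} = 1` and
`B_{n,0} = 0` for `n ≥ 1` (and `B_{0,k} = 0` for `k ≥ 1`). -/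
def bellB : ℕ → ℕ → (ℕ → ℝ) → ℝ
  | 0, 0, _ => 1
  | _+1, 0, _ => 0
  | 0, _+1, _ => 0
  | n+1, k+1, g => ∑ h ∈ Finset.range (n + 1 - k), (n.choose h : ℝ) * bellB (n - h) k g * g (h + 1)
  termination_by n _ _ => n
  decreasing_by omega


/-- The complete Bell polynomial `Y_n(f₁,g₁;…;f_n,g_n) = ∑_{k=1}^n B_{n,k}(g₁,…) f_k`. -/
def bellY (n : ℕ) (f g : ℕ → ℝ) : ℝ := ∑ k ∈ Finset.Icc 1 n, bellB n k g * f k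

lemma bellB_eq_zero (g : ℕ → ℝ) : ∀ n k : ℕ, n < k → bellB n k g = 0
  | 0, k+1, _ => by simp [bellB]
  | n+1, k+1, h => by
    rw [bellB]
    have : n + 1 - k = 0 := by omega
    rw [this]
    simp

lemma contDiff_deriv {n : ℕ} {f : ℝ → ℝ} (hf : ContDiff ℝ (n + 1 : ℕ) f) :
    ContDiff ℝ (n : ℕ) (deriv f) := by
  have h : ContDiff ℝ ((n : WithTop ℕ∞) + 1) f := by exact_mod_cast hf
  exact (contDiff_succ_iff_deriv.mp h).2.2

lemma diff_iter {n h : ℕ} {u : ℝ → ℝ} (hu : ContDiff ℝ (n + 1 : ℕ) u) (hh : h ≤ n) :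
    Differentiable ℝ (iteratedDeriv h u) := by
  rw [iteratedDeriv_eq_iterate]
  have h1 : ContDiff ℝ ((n + 1 - h : ℕ) + h : ℕ) u := by
    have he : (n + 1 - h) + h = n + 1 := by omega
    rw [he]; exact hu
  have h2 := ContDiff.iterate_deriv' (n + 1 - h) h h1
  exact h2.differentiable (by exact_mod_cast (show n + 1 - h ≠ 0 by omega))

lemma pascal_sum (n : ℕ) (a b : ℕ → ℝ) :
    ∑ h ∈ Finset.range (n+2), ((n+1).choose h : ℝ) * a h * b (n+1-h) =
    ∑ h ∈ Finset.range (n+1), (n.choose h : ℝ) * a (h+1) * b (n-h) +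
    ∑ h ∈ Finset.range (n+1), (n.choose h : ℝ) * a h * b (n+1-h) := by
  rw [Finset.sum_range_succ' (fun h => ((n+1).choose h : ℝ) * a h * b (n+1-h)) (n+1)]
  rw [Finset.sum_range_succ' (fun h => ((n : ℕ).choose h : ℝ) * a h * b (n+1-h)) n]
  have hsplit : ∀ i ∈ Finset.range (n+1),
      ((n+1).choose (i+1) : ℝ) * a (i+1) * b (n+1-(i+1)) =
      (n.choose i : ℝ) * a (i+1) * b (n-i) +
        (n.choose (i+1) : ℝ) * a (i+1) * b (n+1-(i+1)) := by
    intro i _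
    have hc : ((n+1).choose (i+1) : ℝ) = (n.choose i : ℝ) + (n.choose (i+1) : ℝ) := by
      exact_mod_cast Nat.choose_succ_succ n i
    have hb : n + 1 - (i + 1) = n - i := by omega
    rw [hc, hb]; ring
  rw [Finset.sum_congr rfl hsplit, Finset.sum_add_distrib]
  have hlast : ∑ i ∈ Finset.range (n+1), ((n : ℕ).choose (i+1) : ℝ) * a (i+1) * b (n+1-(i+1)) =
      ∑ i ∈ Finset.range n, ((n : ℕ).choose (i+1) : ℝ) * a (i+1) * b (n+1-(i+1)) := by
    rw [Finset.sum_range_succ]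
    simp [Nat.choose_succ_self]
  rw [hlast]
  simp only [Nat.choose_zero_right, Nat.cast_one]
  ring

lemma leibniz (n : ℕ) : ∀ (u v : ℝ → ℝ), ContDiff ℝ (n : ℕ) u → ContDiff ℝ (n : ℕ) v → ∀ t : ℝ,
    iteratedDeriv n (fun s => u s * v s) t =
      ∑ h ∈ Finset.range (n+1),
        (n.choose h : ℝ) * iteratedDeriv h u t * iteratedDeriv (n-h) v t := by
  induction n with
  | zero => intro u v _ _ t; simp
  | succ n ih =>
    intro u v hu hv t
    have hu' : ContDiff ℝ (n : ℕ) u := hu.of_le (by exact_mod_cast Nat.le_succ n)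
    have hv' : ContDiff ℝ (n : ℕ) v := hv.of_le (by exact_mod_cast Nat.le_succ n)
    rw [iteratedDeriv_succ]
    have heq : iteratedDeriv n (fun s => u s * v s) =
        fun s => ∑ h ∈ Finset.range (n+1),
          (n.choose h : ℝ) * iteratedDeriv h u s * iteratedDeriv (n-h) v s :=
      funext fun s => ih u v hu' hv' s
    rw [heq, deriv_fun_sum (fun h hh => by
      refine DifferentiableAt.mul (DifferentiableAt.const_mul ?_ _) ?_
      · exact (diff_iter hu (by simp only [Finset.mem_range] at hh; omega)).differentiableAt
      · exact (diff_iter hv (by omega)).differentiableAt)]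
    have hterm : ∀ h ∈ Finset.range (n+1),
        deriv (fun s => (n.choose h : ℝ) * iteratedDeriv h u s * iteratedDeriv (n-h) v s) t =
        (n.choose h : ℝ) * iteratedDeriv (h+1) u t * iteratedDeriv (n-h) v t +
        (n.choose h : ℝ) * iteratedDeriv h u t * iteratedDeriv (n+1-h) v t := by
      intro h hh
      rw [Finset.mem_range] at hh
      have hA : DifferentiableAt ℝ (iteratedDeriv h u) t :=
        (diff_iter hu (by omega)).differentiableAt
      have hB : DifferentiableAt ℝ (iteratedDeriv (n-h) v) t :=
        (diff_iter hv (by omega)).differentiableAt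
      rw [deriv_fun_mul (hA.const_mul _) hB, deriv_const_mul _ hA,
        ← iteratedDeriv_succ, ← iteratedDeriv_succ]
      have h2 : n - h + 1 = n + 1 - h := by omega
      rw [h2]
    rw [Finset.sum_congr rfl hterm, Finset.sum_add_distrib]
    exact (pascal_sum n (fun h => iteratedDeriv h u t) (fun j => iteratedDeriv j v t)).symm

lemma faa_key (n : ℕ) : ∀ f g : ℝ → ℝ, ContDiff ℝ (n : ℕ) f → ContDiff ℝ (n : ℕ) g → ∀ t : ℝ,
    iteratedDeriv n (f ∘ g) t =
      ∑ k ∈ Finset.range (n+1),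
        bellB n k (fun j => iteratedDeriv j g t) * iteratedDeriv k f (g t) := by
  induction n using Nat.strong_induction_on with
  | _ n ih =>
    match n with
    | 0 =>
      intro f g _ _ t
      simp [bellB, Function.comp]
    | Nat.succ n =>
      intro f g hf hg t
      have hf1 : Differentiable ℝ f :=
        hf.differentiable (by exact_mod_cast Nat.succ_ne_zero n)
      have hg1 : Differentiable ℝ g :=
        hg.differentiable (by exact_mod_cast Nat.succ_ne_zero n)
      have hf' : ContDiff ℝ (n : ℕ) (deriv f) := contDiff_deriv hf
      have hg' : ContDiff ℝ (n : ℕ) (deriv g) := contDiff_deriv hg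
      have hgn : ContDiff ℝ (n : ℕ) g := hg.of_le (by exact_mod_cast Nat.le_succ n)
      rw [iteratedDeriv_succ']
      have hcomp : deriv (f ∘ g) = fun s => deriv g s * deriv f (g s) := by
        funext s
        rw [deriv_comp s (hf1 (g s)) (hg1 s)]
        ring
      rw [hcomp]
      have hv : ContDiff ℝ (n : ℕ) (fun s => deriv f (g s)) := hf'.comp hgn
      have hl : iteratedDeriv n (fun s => deriv g s * deriv f (g s)) t =
          ∑ h ∈ Finset.range (n+1), (n.choose h : ℝ) * iteratedDeriv h (deriv g) t *
            iteratedDeriv (n-h) (fun s => deriv f (g s)) t :=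
        leibniz n (deriv g) (fun s => deriv f (g s)) hg' hv t
      rw [hl]
      have hstep : ∀ h ∈ Finset.range (n+1),
          (n.choose h : ℝ) * iteratedDeriv h (deriv g) t *
            iteratedDeriv (n-h) (fun s => deriv f (g s)) t =
          ∑ k ∈ Finset.range (n+1), (n.choose h : ℝ) * iteratedDeriv (h+1) g t *
            (bellB (n-h) k (fun j => iteratedDeriv j g t) * iteratedDeriv (k+1) f (g t)) := by
        intro h hh
        rw [Finset.mem_range] at hh
        have h1 : iteratedDeriv (n-h) (fun s => deriv f (g s)) t =
            ∑ k ∈ Finset.range (n-h+1),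
              bellB (n-h) k (fun j => iteratedDeriv j g t) * iteratedDeriv k (deriv f) (g t) :=
          ih (n-h) (by omega) (deriv f) g (hf'.of_le (by exact_mod_cast Nat.sub_le n h))
            (hgn.of_le (by exact_mod_cast Nat.sub_le n h)) t
        have h2 : ∑ k ∈ Finset.range (n-h+1),
              bellB (n-h) k (fun j => iteratedDeriv j g t) * iteratedDeriv k (deriv f) (g t)
            = ∑ k ∈ Finset.range (n+1),
              bellB (n-h) k (fun j => iteratedDeriv j g t) * iteratedDeriv k (deriv f) (g t) := by
          refine Finset.sum_subset (Finset.range_subset_range.mpr (by omega)) ?_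
          intro k hk hnk
          simp only [Finset.mem_range] at hk hnk
          rw [bellB_eq_zero _ _ _ (by omega), zero_mul]
        rw [h1, h2, Finset.mul_sum]
        refine Finset.sum_congr rfl fun k hk => ?_
        rw [← iteratedDeriv_succ', ← iteratedDeriv_succ']
      rw [Finset.sum_congr rfl hstep, Finset.sum_comm]
      rw [Finset.sum_range_succ'
        (fun k => bellB (n+1) k (fun j => iteratedDeriv j g t) * iteratedDeriv k f (g t)) (n+1)]
      have h0 : bellB (n+1) 0 (fun j => iteratedDeriv j g t) = 0 := by simp [bellB]
      rw [h0, zero_mul, add_zero]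
      refine Finset.sum_congr rfl fun k hk => ?_
      rw [Finset.mem_range] at hk
      rw [bellB]
      have h3 : ∑ h ∈ Finset.range (n+1-k),
            (n.choose h : ℝ) * bellB (n-h) k (fun j => iteratedDeriv j g t) *
              iteratedDeriv (h+1) g t
          = ∑ h ∈ Finset.range (n+1),
            (n.choose h : ℝ) * bellB (n-h) k (fun j => iteratedDeriv j g t) *
              iteratedDeriv (h+1) g t := by
        refine Finset.sum_subset (Finset.range_subset_range.mpr (by omega)) ?_
        intro h hh hnh
        simp only [Finset.mem_range] at hh hnh
        rw [bellB_eq_zero _ _ _ (by omega)]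
        ring
      rw [h3, Finset.sum_mul]
      refine Finset.sum_congr rfl fun h hh => ?_
      ring

/-- Faà di Bruno's formula: the n-th derivative of a composite function is the
complete Bell polynomial in the derivatives of the two functions. -/
theorem faa_di_bruno (n : ℕ) (hn : 1 ≤ n) (f g : ℝ → ℝ)
    (hf : ContDiff ℝ n f) (hg : ContDiff ℝ n g) (t : ℝ) :
    iteratedDeriv n (f ∘ g) t =
      bellY n (fun h => iteratedDeriv h f (g t)) (fun k => iteratedDeriv k g t) := by
  obtain ⟨m, rfl⟩ : ∃ m, n = m + 1 := ⟨n - 1, by omega⟩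
  rw [faa_key (m+1) f g hf hg t]
  rw [Finset.sum_range_succ'
    (fun k => bellB (m+1) k (fun j => iteratedDeriv j g t) * iteratedDeriv k f (g t)) (m+1)]
  have h0 : bellB (m+1) 0 (fun j => iteratedDeriv j g t) = 0 := by simp [bellB]
  rw [h0, zero_mul, add_zero, bellY]
  have himg : Finset.Icc 1 (m+1) = Finset.image (fun i => i + 1) (Finset.range (m+1)) := by
    ext x
    simp only [Finset.mem_Icc, Finset.mem_image, Finset.mem_range]
    constructor
    · intro hx; exact ⟨x - 1, by omega, by omega⟩
    · rintro ⟨i, hi, rfl⟩; omega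
  rw [himg, Finset.sum_image (fun a _ b _ hab => by omega)]
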